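/- Suppose convex open sets U_1, ..., U_{2n+2} in R^d realize the code C_n. Then the sets U_{n+2}, ..., U_{2n+2} form a sunflower of n+1 convex open sets whose center is disjoint from U_{n+1}, and U_{n+1} = U_1 ∪ ... ∪ U_n. -/
import Mathlib


/-- The code `C_n ⊆ 2^{[2n+2]}`, with ground set `{1, …, 2n+2} ⊆ ℕ`. -/
def Cn (n : ℕ) : Set (Finset ℕ) :=
  {∅}
  ∪ {s | ∃ σ : Finset ℕ, σ.Nonempty ∧ σ ⊂ Finset.Icc 1 n ∧ s = σ ∪ {n + 1}}
  ∪ {s | ∃ i, 1 ≤ i ∧ i ≤ n + 1 ∧ s = {n + 1 + i}}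
  ∪ {s | ∃ i, 1 ≤ i ∧ i ≤ n ∧ s = (Finset.Icc 1 n \ {i}) ∪ {n + 1} ∪ {n + 1 + i}}
  ∪ {Finset.Icc 1 n ∪ {n + 1} ∪ {2 * n + 2}}
  ∪ {Finset.Icc (n + 2) (2 * n + 2)}

/-- The code of a collection of sets `U 1, …, U N` in `ℝ^d`. -/
def codeOf {d : ℕ} (U : ℕ → Set (EuclideanSpace ℝ (Fin d))) (N : ℕ) : Set (Finset ℕ) :=
  {σ | σ ⊆ Finset.Icc 1 N ∧
    ((⋂ i ∈ σ, U i) \ ⋃ j ∈ Finset.Icc 1 N \ σ, U j).Nonempty}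

lemma mem_Cn_cases {n : ℕ} {s : Finset ℕ} (h : s ∈ Cn n) :
    s = ∅ ∨
    (∃ σ : Finset ℕ, σ.Nonempty ∧ σ ⊂ Finset.Icc 1 n ∧ s = σ ∪ {n + 1}) ∨
    (∃ i, 1 ≤ i ∧ i ≤ n + 1 ∧ s = {n + 1 + i}) ∨
    (∃ i, 1 ≤ i ∧ i ≤ n ∧ s = (Finset.Icc 1 n \ {i}) ∪ {n + 1} ∪ {n + 1 + i}) ∨
    s = Finset.Icc 1 n ∪ {n + 1} ∪ {2 * n + 2} ∨
    s = Finset.Icc (n + 2) (2 * n + 2) := by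
  rcases h with ((((h | h) | h) | h) | h) | h
  · exact Or.inl h
  · exact Or.inr (Or.inl h)
  · exact Or.inr (Or.inr (Or.inl h))
  · exact Or.inr (Or.inr (Or.inr (Or.inl h)))
  · exact Or.inr (Or.inr (Or.inr (Or.inr (Or.inl h))))
  · exact Or.inr (Or.inr (Or.inr (Or.inr (Or.inr h))))

/-- If a codeword of `C_n` contains two distinct elements `≥ n+2`, it is the big one. -/
lemma Cn_two_big {n : ℕ} {s : Finset ℕ} (hs : s ∈ Cn n) {a b : ℕ}
    (ha : a ∈ s) (hb : b ∈ s) (hab : a ≠ b) (ha2 : n + 2 ≤ a) (hb2 : n + 2 ≤ b) :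
    s = Finset.Icc (n + 2) (2 * n + 2) := by
  rcases mem_Cn_cases hs with h | ⟨σ, hσne, hσ, h⟩ | ⟨i, hi1, hi2, h⟩ | ⟨i, hi1, hi2, h⟩ | h | h
  · subst h; simp at ha
  · subst h
    rcases Finset.mem_union.mp ha with h' | h'
    · have := Finset.mem_Icc.mp (hσ.1 h'); omega
    · have := Finset.mem_singleton.mp h'; omega
  · subst h
    have h1 := Finset.mem_singleton.mp ha
    have h2 := Finset.mem_singleton.mp hb
    omega
  · subst h
    have key : ∀ c ∈ (Finset.Icc 1 n \ {i}) ∪ {n + 1} ∪ {n + 1 + i}, n + 2 ≤ c → c = n + 1 + i := by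
      intro c hc hc2
      rcases Finset.mem_union.mp hc with hc' | hc'
      · rcases Finset.mem_union.mp hc' with hc'' | hc''
        · have := Finset.mem_Icc.mp (Finset.mem_sdiff.mp hc'').1; omega
        · have := Finset.mem_singleton.mp hc''; omega
      · exact Finset.mem_singleton.mp hc'
    have := key a ha ha2
    have := key b hb hb2
    omega
  · subst h
    have key : ∀ c ∈ Finset.Icc 1 n ∪ {n + 1} ∪ {2 * n + 2}, n + 2 ≤ c → c = 2 * n + 2 := by
      intro c hc hc2
      rcases Finset.mem_union.mp hc with hc' | hc'
      · rcases Finset.mem_union.mp hc' with hc'' | hc''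
        · have := Finset.mem_Icc.mp hc''; omega
        · have := Finset.mem_singleton.mp hc''; omega
      · exact Finset.mem_singleton.mp hc'
    have := key a ha ha2
    have := key b hb hb2
    omega
  · exact h

/-- A codeword containing an element of `[1,n]` contains `n+1`. -/
lemma Cn_small_mid {n : ℕ} {s : Finset ℕ} (hs : s ∈ Cn n) {a : ℕ}
    (ha : a ∈ s) (ha1 : 1 ≤ a) (ha2 : a ≤ n) : n + 1 ∈ s := by
  rcases mem_Cn_cases hs with h | ⟨σ, hσne, hσ, h⟩ | ⟨i, hi1, hi2, h⟩ | ⟨i, hi1, hi2, h⟩ | h | h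
  · subst h; simp at ha
  · subst h; simp
  · subst h; have := Finset.mem_singleton.mp ha; omega
  · subst h
    refine Finset.mem_union.mpr (Or.inl (Finset.mem_union.mpr (Or.inr ?_)))
    simp
  · subst h
    refine Finset.mem_union.mpr (Or.inl (Finset.mem_union.mpr (Or.inr ?_)))
    simp
  · subst h; have := Finset.mem_Icc.mp ha; omega

/-- A codeword containing `n+1` contains an element of `[1,n]` (when `n ≥ 2`). -/
lemma Cn_mid_small {n : ℕ} (hn : 2 ≤ n) {s : Finset ℕ} (hs : s ∈ Cn n)
    (hmid : n + 1 ∈ s) : ∃ a ∈ s, 1 ≤ a ∧ a ≤ n := by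
  rcases mem_Cn_cases hs with h | ⟨σ, hσne, hσ, h⟩ | ⟨i, hi1, hi2, h⟩ | ⟨i, hi1, hi2, h⟩ | h | h
  · subst h; simp at hmid
  · subst h
    obtain ⟨a, haσ⟩ := hσne
    have := Finset.mem_Icc.mp (hσ.1 haσ)
    exact ⟨a, Finset.mem_union.mpr (Or.inl haσ), this.1, this.2⟩
  · subst h; have := Finset.mem_singleton.mp hmid; omega
  · subst h
    refine ⟨if i = 1 then 2 else 1, ?_, ?_⟩
    · refine Finset.mem_union.mpr (Or.inl (Finset.mem_union.mpr (Or.inl ?_)))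
      rw [Finset.mem_sdiff, Finset.mem_Icc, Finset.mem_singleton]
      split_ifs with h' <;> omega
    · split_ifs <;> omega
  · subst h
    refine ⟨1, Finset.mem_union.mpr (Or.inl (Finset.mem_union.mpr (Or.inl ?_))), le_refl 1, by omega⟩
    rw [Finset.mem_Icc]; omega
  · subst h; have := Finset.mem_Icc.mp hmid; omega

/-- In any convex open realization of `C_n` (with `n ≥ 2`), the sets
`U (n+2), …, U (2n+2)` form a sunflower of `n+1` convex open sets whose (nonempty) center
is disjoint from `U (n+1)`, and `U (n+1) = U 1 ∪ ⋯ ∪ U n`. -/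
theorem Cn_realization_structure (n : ℕ) (hn : 2 ≤ n) (d : ℕ)
    (U : ℕ → Set (EuclideanSpace ℝ (Fin d)))
    (hconv : ∀ i ∈ Finset.Icc 1 (2 * n + 2), Convex ℝ (U i))
    (hopen : ∀ i ∈ Finset.Icc 1 (2 * n + 2), IsOpen (U i))
    (hcode : codeOf U (2 * n + 2) = Cn n) :
    (⋂ k ∈ Finset.Icc (n + 2) (2 * n + 2), U k).Nonempty ∧
    (∀ i ∈ Finset.Icc (n + 2) (2 * n + 2), ∀ j ∈ Finset.Icc (n + 2) (2 * n + 2), i ≠ j →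
      U i ∩ U j = ⋂ k ∈ Finset.Icc (n + 2) (2 * n + 2), U k) ∧
    (⋂ k ∈ Finset.Icc (n + 2) (2 * n + 2), U k) ∩ U (n + 1) = ∅ ∧
    U (n + 1) = ⋃ i ∈ Finset.Icc 1 n, U i := by
  classical
  -- the support of a point is a codeword
  set supp : EuclideanSpace ℝ (Fin d) → Finset ℕ :=
    fun x => (Finset.Icc 1 (2 * n + 2)).filter (fun i => x ∈ U i) with hsupp
  have hsupp_mem : ∀ x, supp x ∈ Cn n := by
    intro x
    rw [← hcode]
    refine ⟨Finset.filter_subset _ _, x, ?_, ?_⟩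
    · rw [Set.mem_iInter₂]
      intro i hi
      exact (Finset.mem_filter.mp hi).2
    · rw [Set.mem_iUnion₂]
      rintro ⟨j, hj, hxj⟩
      obtain ⟨hj1, hj2⟩ := Finset.mem_sdiff.mp hj
      exact hj2 (Finset.mem_filter.mpr ⟨hj1, hxj⟩)
  have hin_supp : ∀ x i, i ∈ Finset.Icc 1 (2 * n + 2) → x ∈ U i → i ∈ supp x := by
    intro x i hi hx
    exact Finset.mem_filter.mpr ⟨hi, hx⟩
  have hsupp_U : ∀ x i, i ∈ supp x → x ∈ U i := by
    intro x i hi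
    exact (Finset.mem_filter.mp hi).2
  have hsub : ∀ i ∈ Finset.Icc (n + 2) (2 * n + 2), i ∈ Finset.Icc 1 (2 * n + 2) := by
    intro i hi
    have := Finset.mem_Icc.mp hi
    rw [Finset.mem_Icc]; omega
  refine ⟨?_, ?_, ?_, ?_⟩
  · -- the center is nonempty
    have h1 : Finset.Icc (n + 2) (2 * n + 2) ∈ codeOf U (2 * n + 2) := by
      rw [hcode]; exact Or.inr rfl
    obtain ⟨-, x, hx⟩ := h1
    exact ⟨x, hx.1⟩
  · -- sunflower
    intro i hi j hj hij
    apply Set.Subset.antisymm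
    · rintro x ⟨hxi, hxj⟩
      have hi' := hin_supp x i (hsub i hi) hxi
      have hj' := hin_supp x j (hsub j hj) hxj
      have heq := Cn_two_big (hsupp_mem x) hi' hj' hij
        (Finset.mem_Icc.mp hi).1 (Finset.mem_Icc.mp hj).1
      rw [Set.mem_iInter₂]
      intro k hk
      exact hsupp_U x k (heq ▸ hk)
    · intro x hx
      rw [Set.mem_iInter₂] at hx
      exact ⟨hx i hi, hx j hj⟩
  · -- center disjoint from U (n+1)
    rw [Set.eq_empty_iff_forall_notMem]
    rintro x ⟨hxW, hxm⟩
    rw [Set.mem_iInter₂] at hxW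
    have ha : n + 2 ∈ supp x := by
      refine hin_supp x _ (by rw [Finset.mem_Icc]; omega) (hxW _ (by rw [Finset.mem_Icc]; omega))
    have hb : 2 * n + 2 ∈ supp x := by
      refine hin_supp x _ (by rw [Finset.mem_Icc]; omega) (hxW _ (by rw [Finset.mem_Icc]; omega))
    have hm : n + 1 ∈ supp x := hin_supp x _ (by rw [Finset.mem_Icc]; omega) hxm
    have heq := Cn_two_big (hsupp_mem x) ha hb (by omega) (by omega) (by omega)
    rw [heq, Finset.mem_Icc] at hm
    omega
  · -- U (n+1) is the union
    ext x
    rw [Set.mem_iUnion₂]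
    constructor
    · intro hx
      have hm : n + 1 ∈ supp x := hin_supp x _ (by rw [Finset.mem_Icc]; omega) hx
      obtain ⟨a, has, ha1, ha2⟩ := Cn_mid_small hn (hsupp_mem x) hm
      exact ⟨a, Finset.mem_Icc.mpr ⟨ha1, ha2⟩, hsupp_U x a has⟩
    · rintro ⟨a, ha, hxa⟩
      obtain ⟨ha1, ha2⟩ := Finset.mem_Icc.mp ha
      have has : a ∈ supp x := hin_supp x a (by rw [Finset.mem_Icc]; omega) hxa
      exact hsupp_U x _ (Cn_small_mid (hsupp_mem x) has ha1 ha2)
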